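/- For all n ≥ r+1 ≥ 2, CC(n,r) ≤ 2·C(n,r) − 1. -/

import Mathlib

open Finset

/-- An (n,k,r)-covering: a family of k-subsets of {1,…,n} such that every
r-subset of {1,…,n} is contained in at least one block. -/
def IsCovering (n k r : ℕ) (B : Finset (Finset ℕ)) : Prop :=
  (∀ b ∈ B, b ⊆ Finset.Icc 1 n ∧ b.card = k) ∧
  ∀ s ⊆ Finset.Icc 1 n, s.card = r → ∃ b ∈ B, s ⊆ b

/-- The block graph: blocks adjacent if they share an r-subset (i.e. their
intersection has at least r elements). The family is connected if this graph is. -/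
def IsConnectedFamily (r : ℕ) (B : Finset (Finset ℕ)) : Prop :=
  (SimpleGraph.fromRel (fun b c : B => r ≤ ((b : Finset ℕ) ∩ (c : Finset ℕ)).card)).Connected

/-- The covering number C(n,k,r). -/
noncomputable def coveringNum (n k r : ℕ) : ℕ :=
  sInf {m | ∃ B : Finset (Finset ℕ), IsCovering n k r B ∧ B.card = m}

/-- C(n,r) := C(n,r+1,r). -/
noncomputable def cNum (n r : ℕ) : ℕ := coveringNum n (r+1) r

/-- The connected covering number CC(n,r). -/
noncomputable def ccNum (n r : ℕ) : ℕ :=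
  sInf {m | ∃ B : Finset (Finset ℕ),
    IsCovering n (r+1) r B ∧ IsConnectedFamily r B ∧ B.card = m}

/-- The block graph as a named definition. -/
def famG (r : ℕ) (B : Finset (Finset ℕ)) : SimpleGraph B :=
  SimpleGraph.fromRel (fun b c : B => r ≤ ((b : Finset ℕ) ∩ (c : Finset ℕ)).card)

lemma isConnectedFamily_iff (r : ℕ) (B : Finset (Finset ℕ)) :
    IsConnectedFamily r B ↔ (famG r B).Connected := Iff.rfl

lemma famG_adj {r : ℕ} {B : Finset (Finset ℕ)} {x y : B} :
    (famG r B).Adj x y ↔ x ≠ y ∧ r ≤ ((x : Finset ℕ) ∩ (y : Finset ℕ)).card := by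
  rw [famG, SimpleGraph.fromRel_adj]
  constructor
  · rintro ⟨h1, h2 | h2⟩
    · exact ⟨h1, h2⟩
    · exact ⟨h1, by rwa [Finset.inter_comm]⟩
  · rintro ⟨h1, h2⟩; exact ⟨h1, Or.inl h2⟩

/-- Inclusion of families gives a graph homomorphism. -/
def famHom {r : ℕ} {B B' : Finset (Finset ℕ)} (h : B ⊆ B') : famG r B →g famG r B' where
  toFun x := ⟨x.1, h x.2⟩
  map_rel' := by
    intro a b hab
    rw [famG_adj] at hab ⊢
    refine ⟨fun he => hab.1 ?_, hab.2⟩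
    have h2 := congrArg (Subtype.val (p := fun z => z ∈ B')) he
    exact Subtype.ext h2

lemma blocks_ne_val {B : Finset (Finset ℕ)} {b c : B} (h : b ≠ c) :
    (b : Finset ℕ) ≠ (c : Finset ℕ) := fun he => h (Subtype.ext he)

/-- Key lemma: in a covering whose block graph is disconnected, there are two
non-reachable blocks whose intersection has exactly r-1 elements. -/
lemma key_lemma {n r : ℕ} (hr : 1 ≤ r) {B : Finset (Finset ℕ)}
    (hcov : IsCovering n (r+1) r B) (hnc : ¬ (famG r B).Preconnected) :
    ∃ b c : B, ¬ (famG r B).Reachable b c ∧ ((b : Finset ℕ) ∩ (c : Finset ℕ)).card + 1 = r := by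
  classical
  rw [SimpleGraph.Preconnected] at hnc
  push_neg at hnc
  obtain ⟨x, y, hxy⟩ := hnc
  set T : Finset (B × B) := Finset.univ.filter (fun p => ¬ (famG r B).Reachable p.1 p.2) with hTdef
  have hT : T.Nonempty := ⟨(x, y), by simp [hTdef, hxy]⟩
  obtain ⟨p, hpT, hmax⟩ :=
    T.exists_max_image (fun p => ((p.1 : Finset ℕ) ∩ (p.2 : Finset ℕ)).card) hT
  obtain ⟨b, c⟩ := p
  have hreach : ¬ (famG r B).Reachable b c := (Finset.mem_filter.1 hpT).2
  refine ⟨b, c, hreach, ?_⟩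
  have hbc : b ≠ c := fun h => hreach (h ▸ SimpleGraph.Reachable.refl _)
  have hbB := hcov.1 _ b.2
  have hcB := hcov.1 _ c.2
  have hlt : ((b : Finset ℕ) ∩ (c : Finset ℕ)).card < r := by
    by_contra h
    push_neg at h
    exact hreach (famG_adj.mpr ⟨hbc, h⟩).reachable
  by_contra hne
  have ht : ((b : Finset ℕ) ∩ (c : Finset ℕ)).card + 1 < r := by omega
  set t := ((b : Finset ℕ) ∩ (c : Finset ℕ)).card with htdef
  -- pick y0 ∈ c \ b
  have hcb : ((c : Finset ℕ) \ (b : Finset ℕ)).Nonempty := by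
    rw [Finset.sdiff_nonempty]
    intro hsub
    exact blocks_ne_val hbc ((Finset.eq_of_subset_of_card_le hsub (by omega)).symm)
  obtain ⟨y0, hy0⟩ := hcb
  rw [Finset.mem_sdiff] at hy0
  -- extend b ∩ c to a set w ⊆ b of size r-1
  obtain ⟨w, hw1, hw2, hw3⟩ := Finset.exists_subsuperset_card_eq
    (Finset.inter_subset_left : (b : Finset ℕ) ∩ (c : Finset ℕ) ⊆ (b : Finset ℕ))
    (show t ≤ r - 1 by omega) (show r - 1 ≤ (b : Finset ℕ).card by omega)
  have hy0w : y0 ∉ w := fun h => hy0.2 (hw2 h)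
  set s : Finset ℕ := insert y0 w with hsdef
  have hscard : s.card = r := by
    rw [hsdef, Finset.card_insert_of_notMem hy0w, hw3]; omega
  have hsIcc : s ⊆ Finset.Icc 1 n := by
    rw [hsdef]
    intro z hz
    rcases Finset.mem_insert.1 hz with h | h
    · exact hcB.1 (h ▸ hy0.1)
    · exact hbB.1 (hw2 h)
  obtain ⟨d, hdB, hsd⟩ := hcov.2 s hsIcc hscard
  set D : {x // x ∈ B} := ⟨d, hdB⟩ with hDdef
  have hwd : w ⊆ d := fun z hz => hsd (Finset.mem_insert_of_mem hz)
  have h1 : r - 1 ≤ ((b : Finset ℕ) ∩ d).card := by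
    rw [← hw3]
    exact Finset.card_le_card (Finset.subset_inter hw2 hwd)
  have h2 : t + 1 ≤ ((d : Finset ℕ) ∩ (c : Finset ℕ)).card := by
    have hsub : insert y0 ((b : Finset ℕ) ∩ (c : Finset ℕ)) ⊆ d ∩ (c : Finset ℕ) := by
      intro z hz
      rcases Finset.mem_insert.1 hz with h | h
      · subst h; exact Finset.mem_inter.2 ⟨hsd (Finset.mem_insert_self _ _), hy0.1⟩
      · exact Finset.mem_inter.2 ⟨hwd (hw1 h), (Finset.mem_inter.1 h).2⟩
    have hy0bc : y0 ∉ (b : Finset ℕ) ∩ (c : Finset ℕ) := fun h =>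
      hy0.2 (Finset.mem_inter.1 h).1
    calc t + 1 = (insert y0 ((b : Finset ℕ) ∩ (c : Finset ℕ))).card := by
          rw [Finset.card_insert_of_notMem hy0bc]
      _ ≤ _ := Finset.card_le_card hsub
  have hbd : (famG r B).Reachable b D := by
    by_contra h
    have hmem : (b, D) ∈ T := Finset.mem_filter.2 ⟨Finset.mem_univ _, h⟩
    have := hmax _ hmem
    simp only [hDdef] at this
    omega
  have hdc : (famG r B).Reachable D c := by
    by_contra h
    have hmem : (D, c) ∈ T := Finset.mem_filter.2 ⟨Finset.mem_univ _, h⟩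
    have := hmax _ hmem
    simp only [hDdef] at this
    omega
  exact hreach (hbd.trans hdc)

/-- Extension lemma: every nonempty covering extends to a connected covering adding
fewer blocks than it has connected components. -/
lemma extend_lemma {n r : ℕ} (hr : 1 ≤ r) :
    ∀ k : ℕ, ∀ B : Finset (Finset ℕ), Nat.card (famG r B).ConnectedComponent ≤ k →
    IsCovering n (r+1) r B → B.Nonempty →
    ∃ B' : Finset (Finset ℕ), IsCovering n (r+1) r B' ∧ IsConnectedFamily r B' ∧
      B'.card + 1 ≤ B.card + Nat.card (famG r B).ConnectedComponent := by
  classical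
  intro k
  induction k with
  | zero =>
    intro B hk hcov hne
    have : Nonempty B := ⟨⟨hne.choose, hne.choose_spec⟩⟩
    have : Nonempty (famG r B).ConnectedComponent :=
      ⟨(famG r B).connectedComponentMk this.some⟩
    have := Nat.card_pos (α := (famG r B).ConnectedComponent)
    omega
  | succ k ih =>
    intro B hk hcov hne
    have hneV : Nonempty B := ⟨⟨hne.choose, hne.choose_spec⟩⟩
    have hpos : 1 ≤ Nat.card (famG r B).ConnectedComponent := by
      have : Nonempty (famG r B).ConnectedComponent :=
        ⟨(famG r B).connectedComponentMk hneV.some⟩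
      exact Nat.card_pos
    by_cases hconn : (famG r B).Connected
    · exact ⟨B, hcov, (isConnectedFamily_iff r B).2 hconn, by omega⟩
    · have hnp : ¬ (famG r B).Preconnected := by
        intro hp
        haveI := hneV
        exact hconn (SimpleGraph.Connected.mk hp)
      obtain ⟨b, c, hreach, hcard⟩ := key_lemma hr hcov hnp
      have hbc : b ≠ c := fun h => hreach (h ▸ SimpleGraph.Reachable.refl _)
      have hbB := hcov.1 _ b.2
      have hcB := hcov.1 _ c.2
      -- pick x ∈ b \ c and y ∈ c \ b
      have hbcne : ((b : Finset ℕ) \ (c : Finset ℕ)).Nonempty := by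
        rw [Finset.sdiff_nonempty]
        intro hsub
        exact blocks_ne_val hbc (Finset.eq_of_subset_of_card_le hsub (by omega))
      have hcbne : ((c : Finset ℕ) \ (b : Finset ℕ)).Nonempty := by
        rw [Finset.sdiff_nonempty]
        intro hsub
        exact blocks_ne_val hbc ((Finset.eq_of_subset_of_card_le hsub (by omega)).symm)
      obtain ⟨x, hx⟩ := hbcne
      obtain ⟨y, hy⟩ := hcbne
      rw [Finset.mem_sdiff] at hx hy
      have hxy : x ≠ y := fun h => hy.2 (h ▸ hx.1)
      have hybc : y ∉ (b : Finset ℕ) ∩ (c : Finset ℕ) := fun h =>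
        hy.2 (Finset.mem_inter.1 h).1
      have hxibc : x ∉ insert y ((b : Finset ℕ) ∩ (c : Finset ℕ)) := by
        intro h
        rcases Finset.mem_insert.1 h with h | h
        · exact hxy h
        · exact hx.2 (Finset.mem_inter.1 h).2
      set d : Finset ℕ := insert x (insert y ((b : Finset ℕ) ∩ (c : Finset ℕ))) with hddef
      have hdcard : d.card = r + 1 := by
        rw [hddef, Finset.card_insert_of_notMem hxibc,
          Finset.card_insert_of_notMem hybc]
        omega
      have hdIcc : d ⊆ Finset.Icc 1 n := by
        intro z hz
        rw [hddef] at hz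
        rcases Finset.mem_insert.1 hz with h | h
        · exact hbB.1 (h ▸ hx.1)
        · rcases Finset.mem_insert.1 h with h | h
          · exact hcB.1 (h ▸ hy.1)
          · exact hbB.1 (Finset.mem_inter.1 h).1
      have hdb : r ≤ (d ∩ (b : Finset ℕ)).card := by
        have hsub : insert x ((b : Finset ℕ) ∩ (c : Finset ℕ)) ⊆ d ∩ (b : Finset ℕ) := by
          intro z hz
          rcases Finset.mem_insert.1 hz with h | h
          · subst h
            exact Finset.mem_inter.2 ⟨Finset.mem_insert_self _ _, hx.1⟩
          · exact Finset.mem_inter.2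
              ⟨Finset.mem_insert_of_mem (Finset.mem_insert_of_mem h),
               (Finset.mem_inter.1 h).1⟩
        have hxbc : x ∉ (b : Finset ℕ) ∩ (c : Finset ℕ) := fun h =>
          hx.2 (Finset.mem_inter.1 h).2
        calc r = (insert x ((b : Finset ℕ) ∩ (c : Finset ℕ))).card := by
              rw [Finset.card_insert_of_notMem hxbc]; omega
          _ ≤ _ := Finset.card_le_card hsub
      have hdc : r ≤ (d ∩ (c : Finset ℕ)).card := by
        have hsub : insert y ((b : Finset ℕ) ∩ (c : Finset ℕ)) ⊆ d ∩ (c : Finset ℕ) := by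
          intro z hz
          rcases Finset.mem_insert.1 hz with h | h
          · subst h
            exact Finset.mem_inter.2
              ⟨Finset.mem_insert_of_mem (Finset.mem_insert_self _ _), hy.1⟩
          · exact Finset.mem_inter.2
              ⟨Finset.mem_insert_of_mem (Finset.mem_insert_of_mem h),
               (Finset.mem_inter.1 h).2⟩
        calc r = (insert y ((b : Finset ℕ) ∩ (c : Finset ℕ))).card := by
              rw [Finset.card_insert_of_notMem hybc]; omega
          _ ≤ _ := Finset.card_le_card hsub
      have hdvb : d ≠ (b : Finset ℕ) := by
        intro h
        exact hy.2 (h ▸ (Finset.mem_insert_of_mem (Finset.mem_insert_self _ _)))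
      have hdvc : d ≠ (c : Finset ℕ) := by
        intro h
        exact hx.2 (h ▸ (Finset.mem_insert_self _ _))
      have hdnB : d ∉ B := by
        intro hdB
        set D : {z // z ∈ B} := ⟨d, hdB⟩ with hDdef
        have hadj1 : (famG r B).Adj b D := famG_adj.mpr
          ⟨fun h => hdvb (congrArg Subtype.val h).symm, by rwa [Finset.inter_comm]⟩
        have hadj2 : (famG r B).Adj D c := famG_adj.mpr
          ⟨fun h => hdvc (congrArg Subtype.val h), hdc⟩
        exact hreach (hadj1.reachable.trans hadj2.reachable)
      set B2 : Finset (Finset ℕ) := insert d B with hB2def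
      have hsub : B ⊆ B2 := Finset.subset_insert _ _
      have hB2card : B2.card = B.card + 1 := Finset.card_insert_of_notMem hdnB
      have hcov2 : IsCovering n (r+1) r B2 := by
        constructor
        · intro e he
          rcases Finset.mem_insert.1 he with h | h
          · exact h ▸ ⟨hdIcc, hdcard⟩
          · exact hcov.1 _ h
        · intro s hs hsc
          obtain ⟨e, heB, hse⟩ := hcov.2 s hs hsc
          exact ⟨e, hsub heB, hse⟩
      -- the two new adjacencies
      have hdB2 : d ∈ B2 := Finset.mem_insert_self _ _
      set D2 : {z // z ∈ B2} := ⟨d, hdB2⟩ with hD2def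
      have hadj1 : (famG r B2).Adj (famHom (r := r) hsub b) D2 := by
        rw [famG_adj]
        constructor
        · intro h
          have h' : (b : Finset ℕ) = d := congrArg Subtype.val h
          exact hdnB (h' ▸ b.2)
        · show r ≤ ((b : Finset ℕ) ∩ d).card
          rwa [Finset.inter_comm]
      have hadj2 : (famG r B2).Adj (famHom (r := r) hsub c) D2 := by
        rw [famG_adj]
        constructor
        · intro h
          have h' : (c : Finset ℕ) = d := congrArg Subtype.val h
          exact hdnB (h' ▸ c.2)
        · show r ≤ ((c : Finset ℕ) ∩ d).card
          rwa [Finset.inter_comm]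
      -- the component map
      set φ : (famG r B).ConnectedComponent → (famG r B2).ConnectedComponent :=
        SimpleGraph.ConnectedComponent.map (famHom hsub) with hφdef
      have hsurj : Function.Surjective φ := by
        intro C
        refine C.ind ?_
        intro v
        by_cases hv : v.1 ∈ B
        · refine ⟨(famG r B).connectedComponentMk ⟨v.1, hv⟩, ?_⟩
          have : famHom (r := r) hsub ⟨v.1, hv⟩ = v := Subtype.ext rfl
          simp [hφdef, SimpleGraph.ConnectedComponent.map_mk, this]
        · have hvd : v = D2 := by
            apply Subtype.ext
            rcases Finset.mem_insert.1 v.2 with h | h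
            · exact h
            · exact absurd h hv
          refine ⟨(famG r B).connectedComponentMk b, ?_⟩
          simp only [hφdef, SimpleGraph.ConnectedComponent.map_mk]
          exact hvd ▸ SimpleGraph.ConnectedComponent.sound hadj1.reachable
      have hninj : ¬ Function.Injective φ := by
        intro hinj
        have h1 : φ ((famG r B).connectedComponentMk b) =
            φ ((famG r B).connectedComponentMk c) := by
          simp only [hφdef, SimpleGraph.ConnectedComponent.map_mk]
          exact (SimpleGraph.ConnectedComponent.sound hadj1.reachable).trans
            (SimpleGraph.ConnectedComponent.sound hadj2.reachable).symm
        have := hinj h1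
        exact hreach (SimpleGraph.ConnectedComponent.eq.1 this)
      have hlt : Nat.card (famG r B2).ConnectedComponent <
          Nat.card (famG r B).ConnectedComponent := by
        letI : Fintype (famG r B).ConnectedComponent := Fintype.ofFinite _
        letI : Fintype (famG r B2).ConnectedComponent := Fintype.ofFinite _
        rw [Nat.card_eq_fintype_card, Nat.card_eq_fintype_card]
        exact Fintype.card_lt_of_surjective_not_injective φ hsurj hninj
      obtain ⟨B', hcov', hconn', hle'⟩ := ih B2 (by omega) hcov2 ⟨d, hdB2⟩
      exact ⟨B', hcov', hconn', by omega⟩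

theorem stmt_1 (n r : ℕ) (hr : 2 ≤ r + 1) (hn : r + 1 ≤ n) :
    ccNum n r ≤ 2 * cNum n r - 1 := by
  classical
  have hr1 : 1 ≤ r := by omega
  have hIcc : (Finset.Icc 1 n).card = n := by
    rw [Nat.card_Icc]; omega
  -- the set of covering sizes is nonempty
  have hSne : {m | ∃ B : Finset (Finset ℕ), IsCovering n (r+1) r B ∧ B.card = m}.Nonempty := by
    refine ⟨((Finset.Icc 1 n).powersetCard (r+1)).card,
      (Finset.Icc 1 n).powersetCard (r+1), ⟨?_, ?_⟩, rfl⟩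
    · intro b hb
      rw [Finset.mem_powersetCard] at hb
      exact hb
    · intro s hs hsc
      obtain ⟨u, hsu, hu1, hu2⟩ := Finset.exists_subsuperset_card_eq (n := r+1) hs
        (by omega) (by omega)
      exact ⟨u, Finset.mem_powersetCard.2 ⟨hu1, hu2⟩, hsu⟩
  obtain ⟨B, hcov, hBcard⟩ := Nat.sInf_mem hSne
  -- B is nonempty
  have hBne : B.Nonempty := by
    obtain ⟨s, hse, hs1, hs2⟩ := Finset.exists_subsuperset_card_eq (n := r)
      (Finset.empty_subset (Finset.Icc 1 n)) (show (∅ : Finset ℕ).card ≤ r by simp) (by omega)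
    obtain ⟨e, heB, _⟩ := hcov.2 s hs1 hs2
    exact ⟨e, heB⟩
  have hneV : Nonempty B := ⟨⟨hBne.choose, hBne.choose_spec⟩⟩
  -- number of components is at most |B|
  have hcomp : Nat.card (famG r B).ConnectedComponent ≤ B.card := by
    have hs : Function.Surjective ((famG r B).connectedComponentMk) :=
      SimpleGraph.ConnectedComponent.ind (fun v => ⟨v, rfl⟩)
    calc Nat.card (famG r B).ConnectedComponent ≤ Nat.card B :=
          Nat.card_le_card_of_surjective _ hs
      _ = B.card := by simp [Nat.card_eq_fintype_card]
  obtain ⟨B', hcov', hconn', hle⟩ := extend_lemma hr1 _ B le_rfl hcov hBne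
  have hBpos : 1 ≤ B.card := Finset.card_pos.2 hBne
  have hcc : ccNum n r ≤ B'.card := Nat.sInf_le ⟨B', hcov', hconn', rfl⟩
  have hcNum : cNum n r = B.card := hBcard.symm
  omega
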